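/- arXiv:1606.08529 — 2 statements merged into one kernel-verified Lean document; each statement's English description precedes it below -/
import Mathlib

section
/- Let R be a (possibly noncommutative) unital ring. The symmetrized determinant SymDet, defined on an l×l matrix m = (m_{ij}) with entries in R by SymDet(m) = Σ_{σ ∈ Sym_l} (-1)^σ · (m_{1σ(1)} ⊙ ⋯ ⊙ m_{lσ(l)}), where r_1 ⊙ ⋯ ⊙ r_l := (1/l!) Σ_{σ' ∈ Sym_l} r_{σ'(1)} ⋯ r_{σ'(l)} is the symmetrized product, is alternating in the rows of m: if two rows of m are equal, then SymDet(m) = 0, and interchanging two rows of m changes the sign of SymDet(m). -/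
/-- The symmetrized product `r₁ ⊙ ⋯ ⊙ r_l = (1/l!) ∑_{σ'} r_{σ'(1)} ⋯ r_{σ'(l)}`. -/
noncomputable def symProd {R : Type*} [Ring R] [Algebra ℚ R] {l : ℕ} (r : Fin l → R) : R :=
  ((l.factorial : ℚ)⁻¹) • ∑ σ : Equiv.Perm (Fin l), (List.ofFn fun i => r (σ i)).prod

/-- The symmetrized determinant `SymDet m = ∑_σ (-1)^σ (m_{1σ(1)} ⊙ ⋯ ⊙ m_{lσ(l)})`. -/
noncomputable def symDet {R : Type*} [Ring R] [Algebra ℚ R] {l : ℕ}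
    (m : Matrix (Fin l) (Fin l) R) : R :=
  ∑ σ : Equiv.Perm (Fin l), (Equiv.Perm.sign σ : ℤ) • symProd (fun i => m i (σ i))

lemma symProd_comp {R : Type*} [Ring R] [Algebra ℚ R] {l : ℕ} (r : Fin l → R)
    (τ : Equiv.Perm (Fin l)) : symProd (fun i => r (τ i)) = symProd r := by
  unfold symProd
  congr 1
  calc ∑ σ : Equiv.Perm (Fin l), (List.ofFn fun i => r (τ (σ i))).prod
      = ∑ σ : Equiv.Perm (Fin l),
          (List.ofFn fun i => r ((Equiv.mulLeft τ σ) i)).prod := by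
        refine Finset.sum_congr rfl fun σ _ => ?_
        simp [Equiv.Perm.mul_apply]
    _ = ∑ σ : Equiv.Perm (Fin l), (List.ofFn fun i => r (σ i)).prod :=
        Equiv.sum_comp (Equiv.mulLeft τ) fun σ => (List.ofFn fun i => r (σ i)).prod

lemma symDet_row_perm {R : Type*} [Ring R] [Algebra ℚ R] {l : ℕ}
    (m : Matrix (Fin l) (Fin l) R) (τ : Equiv.Perm (Fin l)) :
    symDet (m.submatrix τ id) = (Equiv.Perm.sign τ : ℤ) • symDet m := by
  unfold symDet
  rw [Finset.smul_sum]
  calc ∑ σ : Equiv.Perm (Fin l),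
        (Equiv.Perm.sign σ : ℤ) • symProd (fun i => m.submatrix τ id i (σ i))
      = ∑ σ : Equiv.Perm (Fin l),
          ((Equiv.Perm.sign (Equiv.mulRight τ σ) : ℤ) •
            symProd (fun i => m.submatrix τ id i ((Equiv.mulRight τ σ) i))) := by
        exact (Equiv.sum_comp (Equiv.mulRight τ) fun σ =>
          (Equiv.Perm.sign σ : ℤ) • symProd (fun i => m.submatrix τ id i (σ i))).symm
    _ = ∑ σ : Equiv.Perm (Fin l),
          (Equiv.Perm.sign τ : ℤ) • ((Equiv.Perm.sign σ : ℤ) •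
            symProd fun i => m i (σ i)) := by
        refine Finset.sum_congr rfl fun σ _ => ?_
        have h1 : symProd (fun i => m.submatrix τ id i ((Equiv.mulRight τ σ) i))
            = symProd (fun i => m i (σ i)) := by
          have := symProd_comp (fun j => m j (σ j)) τ
          simpa [Matrix.submatrix, Equiv.Perm.mul_apply] using this
        rw [h1, smul_smul]
        congr 1
        simp [Equiv.Perm.sign_mul, mul_comm]
  
lemma two_smul_eq_zero {R : Type*} [Ring R] [Algebra ℚ R] {x : R} (h : x = -x) : x = 0 := by
  have h2 : (2 : ℚ) • x = 0 := by
    have hx : x + x = 0 := by nth_rewrite 2 [h]; exact add_neg_cancel x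
    rw [two_smul, hx]
  have := congrArg (fun y => ((2 : ℚ)⁻¹) • y) h2
  simpa [smul_smul] using this

/-- `SymDet` is alternating in the rows: it vanishes when two rows agree, and
interchanging two rows changes the sign. -/
theorem symDet_alternating {R : Type*} [Ring R] [Algebra ℚ R] {l : ℕ}
    (m : Matrix (Fin l) (Fin l) R) :
    (∀ i j : Fin l, i ≠ j → m i = m j → symDet m = 0) ∧
    (∀ i j : Fin l, i ≠ j →
      symDet (m.submatrix (Equiv.swap i j) id) = - symDet m) := by
  have key : ∀ i j : Fin l, i ≠ j →
      symDet (m.submatrix (Equiv.swap i j) id) = - symDet m := by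
    intro i j hij
    rw [symDet_row_perm m (Equiv.swap i j), Equiv.Perm.sign_swap hij]
    simp
  refine ⟨?_, key⟩
  intro i j hij hrow
  have hm : m.submatrix (Equiv.swap i j) id = m := by
    ext a b
    simp only [Matrix.submatrix_apply, id_eq, Equiv.swap_apply_def]
    split_ifs with h1 h2
    · rw [h1, ← hrow]
    · rw [h2, hrow]
    · rfl
  have := key i j hij
  rw [hm] at this
  exact two_smul_eq_zero this
end

section
/- Let R be a ring in which m! is invertible and ∂ a derivation of R. For an m×m matrix M(t) with entries differentiable in t and values in R, the derivative of the symmetrized determinant satisfies: ∂ SymDet(M) = Σ_{ν=1}^{m} SymDet(M with its ν-th row replaced by the ∂-derivative of that row). -/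
lemma d_ofFn_prod {R : Type*} [Ring R] (d : R → R)
    (hmul : ∀ x y, d (x * y) = d x * y + x * d y) (l : ℕ) :
    ∀ f : Fin l → R,
      d (List.ofFn f).prod =
        ∑ j : Fin l, (List.ofFn fun i => if i = j then d (f i) else f i).prod := by
  have hd1 : d 1 = 0 := by
    have h := hmul 1 1
    simp only [one_mul, mul_one] at h
    exact left_eq_add.mp h
  induction l with
  | zero => intro f; simp [hd1]
  | succ n ih =>
    intro f
    rw [List.ofFn_succ, List.prod_cons, hmul, ih, Fin.sum_univ_succ]
    congr 1
    · rw [List.ofFn_succ, List.prod_cons]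
      simp [Fin.succ_ne_zero]
    · rw [Finset.mul_sum]
      apply Finset.sum_congr rfl
      intro j _
      rw [List.ofFn_succ, List.prod_cons]
      simp [Fin.succ_ne_zero, Fin.succ_inj]
      intro h; exact absurd h.symm (Fin.succ_ne_zero j)

/-- Leibniz rule for the symmetrized determinant: for a derivation `d`,
`d (SymDet M) = ∑_ν SymDet(M with ν-th row replaced by its `d`-derivative)`. -/
theorem symDet_leibniz {R : Type*} [Ring R] [Algebra ℚ R] {m : ℕ} (d : R → R)
    (hadd : ∀ x y, d (x + y) = d x + d y)
    (hmul : ∀ x y, d (x * y) = d x * y + x * d y)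
    (M : Matrix (Fin m) (Fin m) R) :
    d (symDet M) = ∑ ν : Fin m, symDet (M.updateRow ν (fun j => d (M ν j))) := by
  let D : R →+ R := AddMonoidHom.mk' d hadd
  have hDd : ∀ x, D x = d x := fun _ => rfl
  have key : ∀ (σ σ' : Equiv.Perm (Fin m)),
      d (List.ofFn fun i => M (σ' i) (σ (σ' i))).prod
        = ∑ ν : Fin m, (List.ofFn fun i =>
            M.updateRow ν (fun j => d (M ν j)) (σ' i) (σ (σ' i))).prod := by
    intro σ σ'
    rw [d_ofFn_prod d hmul]
    refine Fintype.sum_equiv σ' _ _ ?_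
    intro j
    refine congrArg _ (congrArg _ (funext fun i => ?_))
    simp only [Matrix.updateRow_apply, EmbeddingLike.apply_eq_iff_eq]
    by_cases h : i = j
    · subst h; simp
    · simp [h]
  trans ∑ σ : Equiv.Perm (Fin m), (Equiv.Perm.sign σ : ℤ) • ((m.factorial : ℚ)⁻¹ •
      ∑ σ' : Equiv.Perm (Fin m), ∑ ν : Fin m,
        (List.ofFn fun i => M.updateRow ν (fun j => d (M ν j)) (σ' i) (σ (σ' i))).prod)
  · rw [← hDd]
    unfold symDet symProd
    rw [map_sum]
    refine Finset.sum_congr rfl fun σ _ => ?_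
    rw [map_zsmul, map_rat_smul, map_sum]
    congr 1
    congr 1
    refine Finset.sum_congr rfl fun σ' _ => ?_
    rw [hDd]
    exact key σ σ'
  · unfold symDet symProd
    rw [Finset.sum_comm]
    refine Finset.sum_congr rfl fun σ _ => ?_
    simp only [Finset.sum_comm (γ := Equiv.Perm (Fin m)), Finset.smul_sum]
end
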